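/- If a query graph Q is isomorphic to a pattern p ∈ P, then every match of Q in G is entirely contained in the pattern-induced subgraph G[P]; hence evaluating Q over G[P] yields exactly the same set of matches as evaluating Q over G. -/

import Mathlib

/-- A pattern is a graph on some vertex type. -/
abbrev Pattern := Σ W : Type, SimpleGraph W

/-- The pattern-induced subgraph `G[P]`: the union, over patterns `p ∈ P` and
homomorphic matches `φ` of `p` into `G`, of the vertices and edges of the match. -/
def patternInduced {V : Type} (G : SimpleGraph V) (P : Set Pattern) : G.Subgraph where
  verts := {v | ∃ p ∈ P, ∃ φ : p.2 →g G, v ∈ Set.range φ}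
  Adj := fun u v => ∃ p ∈ P, ∃ φ : p.2 →g G, ∃ a b, p.2.Adj a b ∧ φ a = u ∧ φ b = v
  adj_sub := by
    rintro u v ⟨p, hp, φ, a, b, hab, rfl, rfl⟩
    exact φ.map_adj hab
  edge_vert := by
    rintro u v ⟨p, hp, φ, a, b, hab, rfl, rfl⟩
    exact ⟨p, hp, φ, a, rfl⟩
  symm := by
    constructor
    rintro u v ⟨p, hp, φ, a, b, hab, rfl, rfl⟩
    exact ⟨p, hp, φ, b, a, hab.symm, rfl, rfl⟩

/-- If a query graph `Q` is isomorphic to a pattern `p ∈ P`, then every match of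
`Q` in `G` is entirely contained in `G[P]`; hence the matches of `Q` over
`G[P]` (via the inclusion homomorphism) are exactly the matches of `Q` over `G`. -/
theorem matches_contained_of_iso_pattern {V W : Type} (G : SimpleGraph V)
    (P : Set Pattern) (Q : SimpleGraph W) (p : Pattern) (hp : p ∈ P)
    (hiso : Nonempty (Q ≃g p.2)) :
    (∀ ψ : Q →g G, Set.range ψ ⊆ (patternInduced G P).verts ∧
      ∀ u v, Q.Adj u v → (patternInduced G P).Adj (ψ u) (ψ v)) ∧
    Function.Bijective
      (fun f : Q →g (patternInduced G P).coe => (patternInduced G P).hom.comp f) := by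
  obtain ⟨e⟩ := hiso
  have key : ∀ ψ : Q →g G, Set.range ψ ⊆ (patternInduced G P).verts ∧
      ∀ u v, Q.Adj u v → (patternInduced G P).Adj (ψ u) (ψ v) := by
    intro ψ
    let φ : p.2 →g G := ψ.comp (e.symm : p.2 →g Q)
    constructor
    · rintro _ ⟨u, rfl⟩
      exact ⟨p, hp, φ, e u, by simp [φ]⟩
    · intro u v huv
      refine ⟨p, hp, φ, e u, e v, ?_, by simp [φ], by simp [φ]⟩
      exact e.map_adj_iff.mpr huv
  refine ⟨key, ?_, ?_⟩
  · intro f g hfg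
    ext u
    have := congrArg (fun h : Q →g G => h u) hfg
    exact this
  · intro ψ
    obtain ⟨hr, ha⟩ := key ψ
    refine ⟨⟨fun u => ⟨ψ u, hr ⟨u, rfl⟩⟩, fun {u v} huv => ha u v huv⟩, rfl⟩
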